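/- Let $\gamma_0$ and $\gamma_1$ be Hermitian $6 \times 6$ complex matrices and $\epsilon \in [0,1]$. Let $\lambda_1^\psi \geq \dots \geq \lambda_6^\psi$ be the decreasing eigenvalues of $\gamma_0$ and assume they satisfy the Borland–Dennis conditions $\lambda_1^\psi + \lambda_2^\psi + \lambda_4^\psi \leq 2$ and $\lambda_1^\psi + \lambda_6^\psi = \lambda_2^\psi + \lambda_5^\psi = \lambda_3^\psi + \lambda_4^\psi = 1$. Assume every eigenvalue of $\gamma_1$ lies in $[0,1]$. Then the decreasing eigenvalues $\lambda_1 \geq \dots \geq \lambda_6$ of $\gamma = (1-\epsilon)\gamma_0 + \epsilon\gamma_1$ satisfy the slightly weakened Borland–Dennis conditions $\lambda_1 + \lambda_2 - \lambda_3 \leq 1 + \epsilon$ and $\lambda_1 + \lambda_2 + \lambda_4 \leq 2 + \epsilon$. -/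

import Mathlib

open Matrix Submodule Module

noncomputable abbrev bdE := EuclideanSpace ℂ (Fin 6)

lemma bd_T_basis {A : Matrix (Fin 6) (Fin 6) ℂ} (hA : A.IsHermitian) (j : Fin 6) :
    Matrix.toEuclideanLin A (hA.eigenvectorBasis j)
      = (hA.eigenvalues j : ℂ) • (hA.eigenvectorBasis j) := by
  ext i
  have := congrFun (hA.mulVec_eigenvectorBasis j) i
  simpa [Matrix.toEuclideanLin_apply, Complex.real_smul] using this

lemma bd_inner_T {A : Matrix (Fin 6) (Fin 6) ℂ} (hA : A.IsHermitian) (j : Fin 6)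
    (x : bdE) :
    inner ℂ (hA.eigenvectorBasis j) (Matrix.toEuclideanLin A x)
      = (hA.eigenvalues j : ℂ) * (inner ℂ (hA.eigenvectorBasis j) x : ℂ) := by
  rw [← (Matrix.isHermitian_iff_isSymmetric.1 hA) (hA.eigenvectorBasis j) x,
    bd_T_basis, inner_smul_left]
  simp

lemma bd_quad_eq {A : Matrix (Fin 6) (Fin 6) ℂ} (hA : A.IsHermitian) (x : bdE) :
    (inner ℂ x (Matrix.toEuclideanLin A x) : ℂ).re
      = ∑ j, hA.eigenvalues j * ‖(inner ℂ (hA.eigenvectorBasis j) x : ℂ)‖ ^ 2 := by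
  rw [← OrthonormalBasis.sum_inner_mul_inner hA.eigenvectorBasis x (Matrix.toEuclideanLin A x)]
  rw [Complex.re_sum]
  refine Finset.sum_congr rfl fun j _ => ?_
  rw [bd_inner_T, ← inner_conj_symm x (hA.eigenvectorBasis j)]
  set z : ℂ := inner ℂ (hA.eigenvectorBasis j) x
  have : (starRingEnd ℂ) z * ((hA.eigenvalues j : ℂ) * z)
      = ((hA.eigenvalues j * ‖z‖ ^ 2 : ℝ) : ℂ) := by
    have hz : (‖z‖ ^ 2 : ℝ) = Complex.normSq z := by
      exact (Complex.normSq_eq_norm_sq z).symm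
    rw [hz]
    push_cast [Complex.normSq_eq_conj_mul_self]
    ring
  rw [this, Complex.ofReal_re]

lemma bd_parseval (b : OrthonormalBasis (Fin 6) ℂ bdE) (x : bdE) :
    ‖x‖ ^ 2 = ∑ j, ‖(inner ℂ (b j) x : ℂ)‖ ^ 2 := by
  have h := OrthonormalBasis.sum_inner_mul_inner b x x
  have h2 : (inner ℂ x x : ℂ) = ((‖x‖ ^ 2 : ℝ) : ℂ) := by
    rw [inner_self_eq_norm_sq_to_K]; norm_cast
  rw [h2] at h
  have := congrArg Complex.re h.symm
  rw [Complex.ofReal_re, Complex.re_sum] at this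
  rw [this]
  refine Finset.sum_congr rfl fun j _ => ?_
  rw [← inner_conj_symm x (b j)]
  set z : ℂ := inner ℂ (b j) x
  have : (starRingEnd ℂ) z * z = ((‖z‖ ^ 2 : ℝ) : ℂ) := by
    have hz : (‖z‖ ^ 2 : ℝ) = Complex.normSq z := by
      exact (Complex.normSq_eq_norm_sq z).symm
    rw [hz]
    push_cast [Complex.normSq_eq_conj_mul_self]
    ring
  rw [this, Complex.ofReal_re]

lemma bd_coeff_zero (b : OrthonormalBasis (Fin 6) ℂ bdE) {m : ℕ} (f : Fin m → Fin 6)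
    {x : bdE} (hx : x ∈ Submodule.span ℂ (Set.range (fun i => b (f i))))
    {j : Fin 6} (hj : ∀ i, f i ≠ j) : (inner ℂ (b j) x : ℂ) = 0 := by
  induction hx using Submodule.span_induction with
  | mem y hy =>
      obtain ⟨i, rfl⟩ := hy
      exact b.orthonormal.2 (fun h => hj i h.symm)
  | zero => simp
  | add y z _ _ hy hz => rw [inner_add_right, hy, hz, add_zero]
  | smul c y _ hy => rw [inner_smul_right, hy, mul_zero]

lemma bd_finrank_span (b : OrthonormalBasis (Fin 6) ℂ bdE) {m : ℕ} (f : Fin m → Fin 6)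
    (hf : Function.Injective f) :
    finrank ℂ (Submodule.span ℂ (Set.range (fun i => b (f i)))) = m := by
  have : (fun i => b (f i)) = ⇑b ∘ f := rfl
  rw [this, finrank_span_eq_card (b.orthonormal.linearIndependent.comp f hf)]
  simp

lemma bd_key {C : Matrix (Fin 6) (Fin 6) ℂ} {c d : ℝ}
    (V W : Submodule ℂ bdE) (h7 : 7 ≤ finrank ℂ V + finrank ℂ W)
    (hV : ∀ x ∈ V, d * ‖x‖ ^ 2 ≤ (inner ℂ x (Matrix.toEuclideanLin C x) : ℂ).re)
    (hW : ∀ x ∈ W, (inner ℂ x (Matrix.toEuclideanLin C x) : ℂ).re ≤ c * ‖x‖ ^ 2) :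
    d ≤ c := by
  have hfin : 0 < finrank ℂ (V ⊓ W : Submodule ℂ bdE) := by
    have hle : finrank ℂ (V ⊔ W : Submodule ℂ bdE) ≤ 6 := by
      have := Submodule.finrank_le (V ⊔ W : Submodule ℂ bdE)
      simpa [finrank_euclideanSpace] using this
    have := Submodule.finrank_sup_add_finrank_inf_eq V W
    omega
  haveI : Nontrivial (V ⊓ W : Submodule ℂ bdE) := Module.nontrivial_of_finrank_pos hfin
  obtain ⟨⟨x, hxVW⟩, hxne⟩ := exists_ne (0 : (V ⊓ W : Submodule ℂ bdE))
  have hx0 : x ≠ 0 := by simpa [Submodule.mk_eq_zero] using hxne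
  have hnorm : 0 < ‖x‖ ^ 2 := pow_pos (norm_pos_iff.mpr hx0) 2
  have h1 := hV x hxVW.1
  have h2 := hW x hxVW.2
  nlinarith [h1, h2, hnorm]

lemma bd_quad_le {A : Matrix (Fin 6) (Fin 6) ℂ} (hA : A.IsHermitian) {m : ℕ}
    (f : Fin m → Fin 6) {c : ℝ} (hc : ∀ i, hA.eigenvalues (f i) ≤ c)
    {x : bdE} (hx : x ∈ Submodule.span ℂ (Set.range (fun i => hA.eigenvectorBasis (f i)))) :
    (inner ℂ x (Matrix.toEuclideanLin A x) : ℂ).re ≤ c * ‖x‖ ^ 2 := by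
  rw [bd_quad_eq hA x, bd_parseval hA.eigenvectorBasis x, Finset.mul_sum]
  refine Finset.sum_le_sum fun j _ => ?_
  by_cases h : ∃ i, f i = j
  · obtain ⟨i, rfl⟩ := h
    exact mul_le_mul_of_nonneg_right (hc i) (by positivity)
  · push_neg at h
    rw [bd_coeff_zero hA.eigenvectorBasis f hx h]
    simp

lemma bd_quad_ge {A : Matrix (Fin 6) (Fin 6) ℂ} (hA : A.IsHermitian) {m : ℕ}
    (f : Fin m → Fin 6) {c : ℝ} (hc : ∀ i, c ≤ hA.eigenvalues (f i))
    {x : bdE} (hx : x ∈ Submodule.span ℂ (Set.range (fun i => hA.eigenvectorBasis (f i)))) :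
    c * ‖x‖ ^ 2 ≤ (inner ℂ x (Matrix.toEuclideanLin A x) : ℂ).re := by
  rw [bd_quad_eq hA x, bd_parseval hA.eigenvectorBasis x, Finset.mul_sum]
  refine Finset.sum_le_sum fun j _ => ?_
  by_cases h : ∃ i, f i = j
  · obtain ⟨i, rfl⟩ := h
    exact mul_le_mul_of_nonneg_right (hc i) (by positivity)
  · push_neg at h
    rw [bd_coeff_zero hA.eigenvectorBasis f hx h]
    simp

lemma bd_quad_global_le {A : Matrix (Fin 6) (Fin 6) ℂ} (hA : A.IsHermitian)
    (h1 : ∀ j, hA.eigenvalues j ≤ 1) (x : bdE) :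
    (inner ℂ x (Matrix.toEuclideanLin A x) : ℂ).re ≤ ‖x‖ ^ 2 := by
  rw [bd_quad_eq hA x, bd_parseval hA.eigenvectorBasis x]
  refine Finset.sum_le_sum fun j _ => ?_
  nlinarith [h1 j, sq_nonneg ‖(inner ℂ (hA.eigenvectorBasis j) x : ℂ)‖]

lemma bd_quad_global_ge {A : Matrix (Fin 6) (Fin 6) ℂ} (hA : A.IsHermitian)
    (h0 : ∀ j, 0 ≤ hA.eigenvalues j) (x : bdE) :
    0 ≤ (inner ℂ x (Matrix.toEuclideanLin A x) : ℂ).re := by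
  rw [bd_quad_eq hA x]
  exact Finset.sum_nonneg fun j _ => mul_nonneg (h0 j) (by positivity)

lemma bd_quad_decomp (γ₀ γ₁ : Matrix (Fin 6) (Fin 6) ℂ) (ε : ℝ) (x : bdE) :
    (inner ℂ x (Matrix.toEuclideanLin ((1 - ε) • γ₀ + ε • γ₁) x) : ℂ).re
      = (1 - ε) * (inner ℂ x (Matrix.toEuclideanLin γ₀ x) : ℂ).re
        + ε * (inner ℂ x (Matrix.toEuclideanLin γ₁ x) : ℂ).re := by
  have hm : ((1 - ε) • γ₀ + ε • γ₁ : Matrix (Fin 6) (Fin 6) ℂ)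
      = ((1 - ε : ℝ) : ℂ) • γ₀ + ((ε : ℝ) : ℂ) • γ₁ := by
    ext i j
    simp [Matrix.add_apply, Matrix.smul_apply, Complex.real_smul]
  rw [hm, map_add, _root_.map_smul, _root_.map_smul, LinearMap.add_apply,
    LinearMap.smul_apply, LinearMap.smul_apply, inner_add_right, inner_smul_right,
    inner_smul_right, Complex.add_re]
  simp

/-- Weyl-type upper bound: `lam k ≤ (1-ε) * lamψ k + ε`. -/
lemma bd_upper {γ₀ γ₁ : Matrix (Fin 6) (Fin 6) ℂ} (hγ₀ : γ₀.IsHermitian)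
    (hγ₁ : γ₁.IsHermitian) {ε : ℝ} (hε0 : 0 ≤ ε) (hε1 : ε ≤ 1)
    (hγ₁ev : ∀ i, hγ₁.eigenvalues i ∈ Set.Icc (0 : ℝ) 1)
    (hγ : ((1 - ε) • γ₀ + ε • γ₁).IsHermitian)
    {lamψ lam : Fin 6 → ℝ} {σ τ : Equiv.Perm (Fin 6)}
    (hlamψ : lamψ = hγ₀.eigenvalues ∘ σ) (hlam : lam = hγ.eigenvalues ∘ τ)
    {mV mW : ℕ} (h7 : 7 ≤ mV + mW)
    (fV : Fin mV → Fin 6) (fW : Fin mW → Fin 6)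
    (hfV : Function.Injective fV) (hfW : Function.Injective fW)
    (k : Fin 6) (hVc : ∀ i, lam k ≤ lam (fV i)) (hWc : ∀ i, lamψ (fW i) ≤ lamψ k) :
    lam k ≤ (1 - ε) * lamψ k + ε := by
  subst hlamψ hlam
  refine bd_key (C := (1 - ε) • γ₀ + ε • γ₁) (Submodule.span ℂ (Set.range (fun i => hγ.eigenvectorBasis (τ (fV i)))))
    (Submodule.span ℂ (Set.range (fun i => hγ₀.eigenvectorBasis (σ (fW i))))) ?_ ?_ ?_
  · rw [bd_finrank_span _ (fun i => τ (fV i)) (fun a b h => hfV (τ.injective h)),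
      bd_finrank_span _ (fun i => σ (fW i)) (fun a b h => hfW (σ.injective h))]
    exact h7
  · intro x hx
    exact bd_quad_ge hγ (fun i => τ (fV i)) (fun i => hVc i) hx
  · intro x hx
    rw [bd_quad_decomp]
    have h0 := bd_quad_le hγ₀ (fun i => σ (fW i)) (fun i => hWc i) hx
    have h1 := bd_quad_global_le hγ₁ (fun j => (hγ₁ev j).2) x
    have h2 := bd_quad_global_ge hγ₁ (fun j => (hγ₁ev j).1) x
    nlinarith [mul_le_mul_of_nonneg_left h0 (by linarith : (0:ℝ) ≤ 1 - ε),
      mul_le_mul_of_nonneg_left h1 hε0]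

/-- Weyl-type lower bound: `(1-ε) * lamψ k ≤ lam k`. -/
lemma bd_lower {γ₀ γ₁ : Matrix (Fin 6) (Fin 6) ℂ} (hγ₀ : γ₀.IsHermitian)
    (hγ₁ : γ₁.IsHermitian) {ε : ℝ} (hε0 : 0 ≤ ε) (hε1 : ε ≤ 1)
    (hγ₁ev : ∀ i, hγ₁.eigenvalues i ∈ Set.Icc (0 : ℝ) 1)
    (hγ : ((1 - ε) • γ₀ + ε • γ₁).IsHermitian)
    {lamψ lam : Fin 6 → ℝ} {σ τ : Equiv.Perm (Fin 6)}
    (hlamψ : lamψ = hγ₀.eigenvalues ∘ σ) (hlam : lam = hγ.eigenvalues ∘ τ)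
    {mV mW : ℕ} (h7 : 7 ≤ mV + mW)
    (fV : Fin mV → Fin 6) (fW : Fin mW → Fin 6)
    (hfV : Function.Injective fV) (hfW : Function.Injective fW)
    (k : Fin 6) (hVc : ∀ i, lamψ k ≤ lamψ (fV i)) (hWc : ∀ i, lam (fW i) ≤ lam k) :
    (1 - ε) * lamψ k ≤ lam k := by
  subst hlamψ hlam
  refine bd_key (C := (1 - ε) • γ₀ + ε • γ₁) (Submodule.span ℂ (Set.range (fun i => hγ₀.eigenvectorBasis (σ (fV i)))))
    (Submodule.span ℂ (Set.range (fun i => hγ.eigenvectorBasis (τ (fW i))))) ?_ ?_ ?_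
  · rw [bd_finrank_span _ (fun i => σ (fV i)) (fun a b h => hfV (σ.injective h)),
      bd_finrank_span _ (fun i => τ (fW i)) (fun a b h => hfW (τ.injective h))]
    exact h7
  · intro x hx
    rw [bd_quad_decomp]
    have h0 := bd_quad_ge hγ₀ (fun i => σ (fV i)) (fun i => hVc i) hx
    have h2 := bd_quad_global_ge hγ₁ (fun j => (hγ₁ev j).1) x
    nlinarith [mul_le_mul_of_nonneg_left h0 (by linarith : (0:ℝ) ≤ 1 - ε),
      mul_nonneg hε0 h2]
  · intro x hx
    exact bd_quad_le hγ (fun i => τ (fW i)) (fun i => hWc i) hx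



/-- Slightly weakened Borland–Dennis conditions for the 1-RDM of a slightly mixed state:
if `γ₀` is Hermitian `6 × 6` with decreasing eigenvalues `lamψ` satisfying the
Borland–Dennis conditions, `γ₁` is Hermitian with all eigenvalues in `[0,1]`, and
`ε ∈ [0,1]`, then the decreasing eigenvalues `lam` of `γ = (1-ε) • γ₀ + ε • γ₁` satisfy
`λ₁ + λ₂ - λ₃ ≤ 1 + ε` and `λ₁ + λ₂ + λ₄ ≤ 2 + ε`.
(Indices are 0-based: `lam 0 = λ₁`, …, `lam 5 = λ₆`; the decreasingly ordered eigenvalues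
are encoded as antitone enumerations obtained from Mathlib's eigenvalues by a permutation.) -/
theorem stmt1 (γ₀ γ₁ : Matrix (Fin 6) (Fin 6) ℂ)
    (hγ₀ : γ₀.IsHermitian) (hγ₁ : γ₁.IsHermitian)
    (ε : ℝ) (hε : ε ∈ Set.Icc (0 : ℝ) 1)
    (lamψ : Fin 6 → ℝ) (σ : Equiv.Perm (Fin 6))
    (hlamψ : lamψ = hγ₀.eigenvalues ∘ σ) (hlamψ_anti : Antitone lamψ)
    (hBD1 : lamψ 0 + lamψ 1 + lamψ 3 ≤ 2)
    (hBD2 : lamψ 0 + lamψ 5 = 1) (hBD3 : lamψ 1 + lamψ 4 = 1) (hBD4 : lamψ 2 + lamψ 3 = 1)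
    (hγ₁ev : ∀ i, hγ₁.eigenvalues i ∈ Set.Icc (0 : ℝ) 1)
    (hγ : ((1 - ε) • γ₀ + ε • γ₁).IsHermitian)
    (lam : Fin 6 → ℝ) (τ : Equiv.Perm (Fin 6))
    (hlam : lam = hγ.eigenvalues ∘ τ) (hlam_anti : Antitone lam) :
    lam 0 + lam 1 - lam 2 ≤ 1 + ε ∧ lam 0 + lam 1 + lam 3 ≤ 2 + ε := by
  obtain ⟨hε0, hε1⟩ := hε
  have h0 : lam 0 ≤ (1 - ε) * lamψ 0 + ε := by
    refine bd_upper hγ₀ hγ₁ hε0 hε1 hγ₁ev hγ hlamψ hlam (mV := 1) (mW := 6) (by norm_num)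
      ![0] ![0,1,2,3,4,5] (by decide) (by decide) 0 ?_ ?_
    · intro i; apply hlam_anti; fin_cases i <;> decide
    · intro i; apply hlamψ_anti; fin_cases i <;> decide
  have h1 : lam 1 ≤ (1 - ε) * lamψ 1 + ε := by
    refine bd_upper hγ₀ hγ₁ hε0 hε1 hγ₁ev hγ hlamψ hlam (mV := 2) (mW := 5) (by norm_num)
      ![0,1] ![1,2,3,4,5] (by decide) (by decide) 1 ?_ ?_
    · intro i; apply hlam_anti; fin_cases i <;> decide
    · intro i; apply hlamψ_anti; fin_cases i <;> decide
  have h3 : lam 3 ≤ (1 - ε) * lamψ 3 + ε := by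
    refine bd_upper hγ₀ hγ₁ hε0 hε1 hγ₁ev hγ hlamψ hlam (mV := 4) (mW := 3) (by norm_num)
      ![0,1,2,3] ![3,4,5] (by decide) (by decide) 3 ?_ ?_
    · intro i; apply hlam_anti; fin_cases i <;> decide
    · intro i; apply hlamψ_anti; fin_cases i <;> decide
  have h2 : (1 - ε) * lamψ 2 ≤ lam 2 := by
    refine bd_lower hγ₀ hγ₁ hε0 hε1 hγ₁ev hγ hlamψ hlam (mV := 3) (mW := 4) (by norm_num)
      ![0,1,2] ![2,3,4,5] (by decide) (by decide) 2 ?_ ?_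
    · intro i; apply hlamψ_anti; fin_cases i <;> decide
    · intro i; apply hlam_anti; fin_cases i <;> decide
  constructor
  · nlinarith [h0, h1, h2, hBD1, hBD4, hε0, hε1]
  · nlinarith [h0, h1, h3, hBD1, hε0, hε1]
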